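/- Let (x_j), (s_j) be sequences of nonnegative reals with x_0 = 0 satisfying, for all j ≥ 1, x_j ≥ x_{j−1}·2^{a_j} + (1/W)·(2^{a_j} − 1) where a_j ≥ 0 and W > 0, and let s_j = a_1 + ⋯ + a_j. Then for every j, x_j ≥ (1/W)·(2^{s_j} − 1). -/

import Mathlib

theorem stmt_2 (x a s : ℕ → ℝ) (W : ℝ) (hW : 0 < W)
    (hx0 : x 0 = 0) (hxnn : ∀ j, 0 ≤ x j) (ha : ∀ j, 0 ≤ a j)
    (hrec : ∀ j ≥ 1, x j ≥ x (j - 1) * (2:ℝ) ^ (a j) + (1 / W) * ((2:ℝ) ^ (a j) - 1))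
    (hs : ∀ j, s j = ∑ i ∈ Finset.Icc 1 j, a i) :
    ∀ j, x j ≥ (1 / W) * ((2:ℝ) ^ (s j) - 1) := by
  intro j
  induction j with
  | zero =>
      simp [hx0, hs 0]
  | succ n ih =>
      have hrn := hrec (n + 1) (Nat.le_add_left 1 n)
      simp only [Nat.add_sub_cancel] at hrn
      have hsn : s (n + 1) = s n + a (n + 1) := by
        rw [hs, hs, Finset.sum_Icc_succ_top (Nat.one_le_iff_ne_zero.mpr (Nat.succ_ne_zero n))]
      have h2 : (0:ℝ) < (2:ℝ) ^ (a (n+1)) := Real.rpow_pos_of_pos (by norm_num) _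
      have key : x n * (2:ℝ) ^ (a (n+1)) + (1 / W) * ((2:ℝ) ^ (a (n+1)) - 1)
          ≥ (1 / W) * ((2:ℝ) ^ (s (n+1)) - 1) := by
        rw [hsn, Real.rpow_add (by norm_num : (0:ℝ) < 2)]
        have := mul_le_mul_of_nonneg_right ih h2.le
        nlinarith
      linarith
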